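/- Let G be a locally compact second countable group with left Haar measure ν, and let Z be a group of automorphisms of G that are also homeomorphisms of G (each A ∈ Z induces a map H ↦ A(H) on Sub_G). Suppose μ is a nonzero finite Borel measure on Sub_G that is invariant under the induced action of every A ∈ Z, and that μ-almost every H ∈ Sub_G is a lattice in G (a discrete subgroup admitting a Borel fundamental domain of finite ν-measure for its left-translation action on G). Then A_*ν = ν for every A ∈ Z. -/

import Mathlib

open MeasureTheory
open Pointwise
open scoped ENNReal NNReal

/-- The space of closed subgroups of a topological group `G`. -/
def SubG (G : Type*) [Group G] [TopologicalSpace G] : Type _ :=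
  {H : Subgroup G // IsClosed (H : Set G)}

variable {G : Type*} [Group G] [TopologicalSpace G]

/-- The Chabauty topology on the space of closed subgroups. -/
instance : TopologicalSpace (SubG G) :=
  TopologicalSpace.generateFrom
    ({S | ∃ U : Set G, IsOpen U ∧ S = {H : SubG G | ((H.1 : Set G) ∩ U).Nonempty}} ∪
     {S | ∃ K : Set G, IsCompact K ∧ S = {H : SubG G | (H.1 : Set G) ∩ K = ∅}})

instance : MeasurableSpace (SubG G) := borel (SubG G)

/-- The map on `SubG G` induced by an automorphism of `G` which is a homeomorphism:
`H ↦ A(H)`. -/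
def autSub (A : G ≃* G) (hc : Continuous A.symm) (H : SubG G) : SubG G :=
  ⟨H.1.comap A.symm.toMonoidHom, by
    have hs : ((H.1.comap A.symm.toMonoidHom : Subgroup G) : Set G)
        = ⇑A.symm ⁻¹' (H.1 : Set G) := rfl
    rw [hs]; exact H.2.preimage hc⟩

/-! ### Auxiliary lemmas -/

instance : BorelSpace (SubG G) := ⟨rfl⟩

lemma isOpen_hit {U : Set G} (hU : IsOpen U) :
    IsOpen {H : SubG G | ((H.1 : Set G) ∩ U).Nonempty} :=
  TopologicalSpace.isOpen_generateFrom_of_mem (Or.inl ⟨U, hU, rfl⟩)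

lemma isOpen_miss {K : Set G} (hK : IsCompact K) :
    IsOpen {H : SubG G | (H.1 : Set G) ∩ K = ∅} :=
  TopologicalSpace.isOpen_generateFrom_of_mem (Or.inr ⟨K, hK, rfl⟩)

lemma autSub_coe (A : G ≃* G) (hc : Continuous A.symm) (H : SubG G) :
    ((autSub A hc H).1 : Set G) = ⇑A.symm ⁻¹' (H.1 : Set G) := rfl

lemma continuous_autSub (A : G ≃* G) (hA : Continuous A) (hA' : Continuous A.symm) :
    Continuous (autSub A hA') := by
  apply continuous_generateFrom_iff.mpr
  rintro S (⟨U, hU, rfl⟩ | ⟨K, hK, rfl⟩)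
  · have he : autSub A hA' ⁻¹' {H : SubG G | ((H.1 : Set G) ∩ U).Nonempty}
        = {H : SubG G | ((H.1 : Set G) ∩ (⇑A ⁻¹' U)).Nonempty} := by
      ext H
      constructor
      · rintro ⟨x, hxH, hxU⟩
        exact ⟨A.symm x, hxH, by simpa using hxU⟩
      · rintro ⟨y, hy, hAy⟩
        refine ⟨A y, ?_, hAy⟩
        rw [autSub_coe]
        simpa using hy
    rw [he]
    exact isOpen_hit (hU.preimage hA)
  · have he : autSub A hA' ⁻¹' {H : SubG G | (H.1 : Set G) ∩ K = ∅}
        = {H : SubG G | (H.1 : Set G) ∩ (⇑A ⁻¹' K) = ∅} := by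
      ext H
      simp only [Set.mem_preimage, Set.mem_setOf_eq, Set.eq_empty_iff_forall_notMem,
        Set.mem_inter_iff, not_and, autSub_coe]
      constructor
      · intro h y hy hAy
        exact h (A y) (by simpa using hy) hAy
      · intro h x hx hxK
        have := h (A.symm x) hx
        simp only [MulEquiv.apply_symm_apply] at this
        exact this hxK
    rw [he]
    have : ⇑A ⁻¹' K = ⇑A.symm '' K := by
      ext x
      constructor
      · intro h
        exact ⟨A x, h, by simp⟩
      · rintro ⟨k, hk, rfl⟩
        simpa using hk
    rw [this] at he ⊢
    exact isOpen_miss (hK.image hA')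

lemma countable_of_discrete_subgroup [SecondCountableTopology G] {H : Subgroup G}
    (hd : DiscreteTopology H) : Countable H := by
  haveI := hd
  exact TopologicalSpace.separableSpace_iff_countable.mp inferInstance

lemma measurableSMul_subgroup [MeasurableSpace G] [BorelSpace G] [IsTopologicalGroup G]
    (H : Subgroup G) : MeasurableSMul H G := by
  refine { measurable_const_smul := ?_, measurable_smul_const := ?_ }
  · intro c
    have : Measurable fun x : G => (c : G) * x := measurable_const_mul _
    simpa [Subgroup.smul_def, smul_eq_mul] using this
  · intro x
    have : Measurable fun c : H => (c : G) * x :=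
      (measurable_mul_const x).comp measurable_subtype_coe
    simpa [Subgroup.smul_def, smul_eq_mul] using this

lemma smulInvariant_subgroup [MeasurableSpace G] [BorelSpace G] [IsTopologicalGroup G]
    (ν : Measure G) [ν.IsMulLeftInvariant] (H : Subgroup G) :
    SMulInvariantMeasure H G ν := by
  constructor
  intro c s hs
  have := measure_preimage_mul ν (c : G) s
  simpa [Subgroup.smul_def, smul_eq_mul] using this

/-- Lower bound for the measure of a fundamental domain: if `V` is open and its translates
by distinct elements of `H` are disjoint, then `ν V ≤ ν F`. -/
lemma covol_lower_bound [IsTopologicalGroup G] [MeasurableSpace G] [BorelSpace G]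
    (ν : Measure G) [ν.IsMulLeftInvariant]
    (H : Subgroup G) [Countable H] {F : Set G} (hF : MeasurableSet F)
    (hfd : IsFundamentalDomain H F ν) {V : Set G} (hVo : IsOpen V)
    (hsep : ∀ γ : H, ∀ v ∈ V, ∀ w ∈ V, (γ : G) * v = w → γ = 1) :
    ν V ≤ ν F := by
  have h0 : ν {x : G | ¬∃ γ : H, γ • x ∈ F} = 0 := by
    have := hfd.ae_covers
    rwa [MeasureTheory.ae_iff] at this
  have hsub : V ⊆ (⋃ γ : H, V ∩ (fun x => γ • x) ⁻¹' F) ∪ {x : G | ¬∃ γ : H, γ • x ∈ F} := by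
    intro x hx
    by_cases h : ∃ γ : H, γ • x ∈ F
    · obtain ⟨γ, hγ⟩ := h
      exact Or.inl (Set.mem_iUnion.mpr ⟨γ, hx, hγ⟩)
    · exact Or.inr h
  have step1 : ν V ≤ ∑' γ : H, ν (V ∩ (fun x => γ • x) ⁻¹' F) := by
    calc ν V ≤ ν ((⋃ γ : H, V ∩ (fun x => γ • x) ⁻¹' F) ∪ {x : G | ¬∃ γ : H, γ • x ∈ F}) :=
          measure_mono hsub
      _ ≤ ν (⋃ γ : H, V ∩ (fun x => γ • x) ⁻¹' F) + ν {x : G | ¬∃ γ : H, γ • x ∈ F} :=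
          measure_union_le _ _
      _ = ν (⋃ γ : H, V ∩ (fun x => γ • x) ⁻¹' F) := by rw [h0, add_zero]
      _ ≤ ∑' γ : H, ν (V ∩ (fun x => γ • x) ⁻¹' F) := measure_iUnion_le _
  have step2 : ∀ γ : H, ν (V ∩ (fun x => γ • x) ⁻¹' F) = ν ((γ : G) • V ∩ F) := by
    intro γ
    have hid : V ∩ (fun x => γ • x) ⁻¹' F = (fun x => (γ : G) * x) ⁻¹' ((γ : G) • V ∩ F) := by
      ext x
      simp [Subgroup.smul_def, smul_eq_mul, Set.mem_smul_set_iff_inv_smul_mem]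
    rw [hid, measure_preimage_mul]
  have hdisj : Pairwise (Function.onFun Disjoint fun γ : H => (γ : G) • V ∩ F) := by
    intro γ δ hne
    refine Set.disjoint_left.mpr ?_
    rintro x ⟨hxγ, -⟩ ⟨hxδ, -⟩
    obtain ⟨v, hv, hxv⟩ := hxγ
    obtain ⟨w, hw, hxw⟩ := hxδ
    have : ((δ⁻¹ * γ : H) : G) * v = w := by
      have h1 : (γ : G) * v = (δ : G) * w := by
        rw [← hxv] at hxw
        simpa [smul_eq_mul] using hxw.symm
      push_cast
      rw [mul_assoc, h1, ← mul_assoc]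
      simp
    have := hsep _ v hv w hw this
    apply hne
    have : δ⁻¹ * γ = 1 := this
    have := mul_eq_one_iff_inv_eq.mp this
    simp at this
    exact this.symm
  have hmeas : ∀ γ : H, MeasurableSet ((γ : G) • V ∩ F) := fun γ =>
    ((hVo.smul ((γ : G))).measurableSet).inter hF
  have step3 : ∑' γ : H, ν ((γ : G) • V ∩ F) = ν (⋃ γ : H, (γ : G) • V ∩ F) :=
    (measure_iUnion hdisj hmeas).symm
  have step4 : ν (⋃ γ : H, (γ : G) • V ∩ F) ≤ ν F :=
    measure_mono (Set.iUnion_subset fun γ => Set.inter_subset_right)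
  calc ν V ≤ ∑' γ : H, ν (V ∩ (fun x => γ • x) ⁻¹' F) := step1
    _ = ∑' γ : H, ν ((γ : G) • V ∩ F) := by simp_rw [step2]
    _ ≤ ν F := step3 ▸ step4

/-- Transport of fundamental domains along a bicontinuous automorphism. -/
lemma fd_transport [MeasurableSpace G] (ν : Measure G) (B : G ≃* G)
    (hm : Measurable B.symm) (hq : Measure.QuasiMeasurePreserving (⇑B.symm) ν ν)
    {H : Subgroup G} {F : Set G} (h : IsFundamentalDomain H F ν) :
    IsFundamentalDomain (H.comap B.symm.toMonoidHom) (⇑B.symm ⁻¹' F) ν := by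
  refine h.preimage_of_equiv (f := ⇑B.symm) hq
    (e := fun γ => (⟨B γ, by simp [Subgroup.mem_comap]⟩ : H.comap B.symm.toMonoidHom)) ?_ ?_
  · constructor
    · intro a b hab
      have : B (a : G) = B (b : G) := congrArg Subtype.val hab
      exact Subtype.ext (B.injective this)
    · rintro ⟨y, hy⟩
      refine ⟨⟨B.symm y, hy⟩, ?_⟩
      exact Subtype.ext (by simp)
  · intro γ x
    show B.symm (B (γ : G) * x) = (γ : G) * B.symm x
    simp [Subgroup.smul_def, smul_eq_mul, map_mul]

/-- Key lemma: there is no bicontinuous automorphism preserving `μ` which scales the Haar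
measure by a factor `c < 1` (in the sense `ν.map B.symm = c • ν`). -/
lemma no_shrink
    [IsTopologicalGroup G] [LocallyCompactSpace G] [SecondCountableTopology G]
    [MeasurableSpace G] [BorelSpace G]
    (ν : Measure G) (hν : ν.IsHaarMeasure)
    (μ : Measure (SubG G)) (hfin : IsFiniteMeasure μ) (hne : μ ≠ 0)
    (B : G ≃* G) (hB : Continuous B) (hB' : Continuous B.symm)
    (hinv : μ.map (autSub B hB') = μ)
    (hlat : ∀ᵐ H ∂μ, DiscreteTopology H.1 ∧ ∃ F : Set G, MeasurableSet F ∧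
      IsFundamentalDomain H.1 F ν ∧ ν F ≠ ⊤)
    (c : ℝ≥0∞) (hc1 : c < 1)
    (hmapB : ν.map (⇑B.symm) = c • ν) : False := by
  haveI := hν; haveI := hfin
  classical
  have hμuniv : μ Set.univ ≠ 0 := by
    simpa [Measure.measure_univ_eq_zero] using hne
  haveI : (MeasureTheory.ae μ).NeBot := ae_neBot.mpr hne
  obtain ⟨H₀, hH₀⟩ := hlat.exists
  -- `G` is T1 since it has a closed discrete subgroup
  haveI hT1 : T1Space G := by
    obtain ⟨hd, -⟩ := hH₀
    haveI := hd
    have hopen : IsOpen {(⟨1, (H₀.1).one_mem⟩ : H₀.1)} := isOpen_discrete _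
    rw [isOpen_induced_iff] at hopen
    obtain ⟨U, hUo, hU⟩ := hopen
    have h1U : (1 : G) ∈ U := by
      have : (⟨1, (H₀.1).one_mem⟩ : H₀.1) ∈ Subtype.val ⁻¹' U := by rw [hU]; rfl
      exact this
    have key : closure ({1} : Set G) ⊆ {1} := by
      intro z hz
      have hzH : z ∈ (H₀.1 : Set G) := by
        have hmin : closure ({1} : Set G) ⊆ (H₀.1 : Set G) :=
          closure_minimal (Set.singleton_subset_iff.mpr (H₀.1).one_mem) H₀.2
        exact hmin hz
      have hzi : z⁻¹ ∈ closure ({1} : Set G) := by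
        have hmt : Set.MapsTo (fun x : G => x⁻¹) (closure {1}) (closure {1}) := by
          apply Set.MapsTo.closure ?_ continuous_inv
          intro x hx
          simp only [Set.mem_singleton_iff] at hx
          simp [hx]
        simpa using hmt hz
      have hzU : z ∈ U := by
        have hmem : z⁻¹ ∈ (fun x => z * x) ⁻¹' U := by simpa using h1U
        obtain ⟨w, hwU, hw1⟩ := (mem_closure_iff.mp hzi) ((fun x => z * x) ⁻¹' U)
          (hUo.preimage (continuous_mul_left z)) hmem
        have hw : w = 1 := hw1
        rw [hw] at hwU
        simpa using hwU
      have hmem2 : (⟨z, hzH⟩ : H₀.1) ∈ Subtype.val ⁻¹' U := hzU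
      rw [hU] at hmem2
      simpa using congrArg Subtype.val hmem2
    have hcl : closure ({1} : Set G) = {1} := Set.Subset.antisymm key subset_closure
    exact IsTopologicalGroup.t1Space G (hcl ▸ isClosed_closure)
  -- countable basis and the uniform-discreteness sets
  set 𝒱 : Set (Set G) := TopologicalSpace.countableBasis G with h𝒱
  have h𝒱count : 𝒱.Countable := TopologicalSpace.countable_countableBasis G
  have h𝒱basis := TopologicalSpace.isBasis_countableBasis G
  set D : Set G → Set (SubG G) := fun N =>
    ⋂ (W : Set G) (_ : W ∈ 𝒱) (_ : (1:G) ∈ W),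
      {H : SubG G | (H.1 : Set G) ∩ (N \ W) = ∅} with hD
  have hDmeas : ∀ N : Set G, IsCompact N → MeasurableSet (D N) := by
    intro N hN
    apply MeasurableSet.biInter h𝒱count
    intro W hW
    apply MeasurableSet.iInter
    intro h1W
    exact (isOpen_miss (hN.diff (h𝒱basis.isOpen hW))).measurableSet
  have hDmem : ∀ (N : Set G) (H : SubG G), H ∈ D N ↔
      ∀ W ∈ 𝒱, (1:G) ∈ W → (H.1 : Set G) ∩ (N \ W) = ∅ := by
    intro N H
    simp [hD, Set.mem_iInter]
  have hDsub : ∀ (N : Set G) (H : SubG G), H ∈ D N → (H.1 : Set G) ∩ N ⊆ {1} := by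
    intro N H hH x hx
    by_contra hx1
    have hx1' : x ≠ 1 := hx1
    have h1mem : (1:G) ∈ ({x}ᶜ : Set G) := by simp [Ne.symm hx1']
    obtain ⟨W, hW𝒱, h1W, hWsub⟩ :=
      h𝒱basis.exists_subset_of_mem_open h1mem isOpen_compl_singleton
    have hxin : x ∈ (H.1 : Set G) ∩ (N \ W) :=
      ⟨hx.1, hx.2, fun hxW => (hWsub hxW) rfl⟩
    rw [(hDmem N H).mp hH W hW𝒱 h1W] at hxin
    exact hxin
  have hDsup : ∀ (N : Set G) (H : SubG G), (H.1 : Set G) ∩ N ⊆ {1} → H ∈ D N := by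
    intro N H hsub
    rw [hDmem]
    intro W hW h1W
    rw [Set.eq_empty_iff_forall_notMem]
    rintro x ⟨hxH, hxN, hxW⟩
    have hx1 : x = 1 := Set.mem_singleton_iff.mp (hsub ⟨hxH, hxN⟩)
    exact hxW (hx1 ▸ h1W)
  -- every discrete closed subgroup lies in some `D (closure W)`
  have hexists : ∀ H : SubG G, DiscreteTopology H.1 →
      ∃ W ∈ 𝒱, (1:G) ∈ W ∧ IsCompact (closure W) ∧ (H.1 : Set G) ∩ closure W ⊆ {1} := by
    intro H hd
    haveI := hd
    have hopen : IsOpen {(⟨1, (H.1).one_mem⟩ : H.1)} := isOpen_discrete _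
    rw [isOpen_induced_iff] at hopen
    obtain ⟨U, hUo, hU⟩ := hopen
    have h1U : (1:G) ∈ U := by
      have : (⟨1, (H.1).one_mem⟩ : H.1) ∈ Subtype.val ⁻¹' U := by rw [hU]; rfl
      exact this
    obtain ⟨K, hK, h1K, hKU⟩ := exists_compact_subset hUo h1U
    obtain ⟨C, hCnhds, hCclosed, hCsub⟩ :=
      exists_mem_nhds_isClosed_subset (isOpen_interior.mem_nhds h1K)
    obtain ⟨W, hW𝒱, h1W, hWsub⟩ := h𝒱basis.mem_nhds_iff.mp hCnhds
    have hclW : closure W ⊆ K :=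
      (closure_minimal hWsub hCclosed).trans (hCsub.trans interior_subset)
    refine ⟨W, hW𝒱, h1W, hK.of_isClosed_subset isClosed_closure hclW, ?_⟩
    intro x hx
    have hxU : x ∈ U := hKU (hclW hx.2)
    have hmem2 : (⟨x, hx.1⟩ : H.1) ∈ Subtype.val ⁻¹' U := hxU
    rw [hU] at hmem2
    simpa using congrArg Subtype.val hmem2
  -- find one with positive measure
  set 𝒲 : Set (Set G) := {W ∈ 𝒱 | (1:G) ∈ W ∧ IsCompact (closure W)} with h𝒲
  obtain ⟨W, hW𝒲, hμD⟩ : ∃ W ∈ 𝒲, μ (D (closure W)) ≠ 0 := by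
    by_contra hcon
    push_neg at hcon
    have hnull : μ (⋃ W ∈ 𝒲, D (closure W)) = 0 := by
      rw [measure_biUnion_null_iff (h𝒱count.mono (Set.sep_subset _ _))]
      exact hcon
    have hae : ∀ᵐ H ∂μ, H ∈ ⋃ W ∈ 𝒲, D (closure W) := by
      filter_upwards [hlat] with H h
      obtain ⟨W, h1, h2, h3, h4⟩ := hexists H h.1
      exact Set.mem_biUnion ⟨h1, h2, h3⟩ (hDsup _ _ h4)
    rw [MeasureTheory.ae_iff] at hae
    apply hμuniv
    have hsplit : μ Set.univ ≤ μ (⋃ W ∈ 𝒲, D (closure W))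
        + μ {H : SubG G | H ∉ ⋃ W ∈ 𝒲, D (closure W)} := by
      refine le_trans (measure_mono ?_) (measure_union_le _ _)
      intro H _
      by_cases h : H ∈ ⋃ W ∈ 𝒲, D (closure W)
      · exact Or.inl h
      · exact Or.inr h
    rw [hnull, hae, add_zero] at hsplit
    exact le_antisymm hsplit zero_le
  obtain ⟨hW𝒱, h1W, hWc⟩ := hW𝒲
  set N : Set G := closure W with hN
  have hWo : IsOpen W := h𝒱basis.isOpen hW𝒱
  -- a small open set whose translates are disjoint for subgroups in `D N`
  obtain ⟨V₀, hV₀o, h1V₀, hV₀sub⟩ := exists_open_nhds_one_mul_subset (hWo.mem_nhds h1W)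
  set V : Set G := V₀ ∩ V₀⁻¹ with hV
  have hVo : IsOpen V := hV₀o.inter hV₀o.inv
  have h1V : (1:G) ∈ V := ⟨h1V₀, by simpa using h1V₀⟩
  have hVN : ∀ v ∈ V, ∀ w ∈ V, v * w⁻¹ ∈ N := by
    intro v hv w hw
    exact subset_closure (hV₀sub (Set.mul_mem_mul hv.1 hw.2))
  -- the induced transformation
  set T : SubG G → SubG G := autSub B hB' with hT
  have hTm : Measurable T := (continuous_autSub B hB hB').measurable
  have hmp : MeasurePreserving T μ μ := ⟨hTm, hinv⟩
  have hcons : Conservative T μ := hmp.conservative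
  have hall : ∀ᵐ H ∂μ, ∀ n : ℕ, DiscreteTopology (T^[n] H).1 ∧ ∃ F : Set G, MeasurableSet F ∧
      IsFundamentalDomain (T^[n] H).1 F ν ∧ ν F ≠ ⊤ := by
    rw [MeasureTheory.ae_all_iff]
    intro n
    exact ((hmp.iterate n).quasiMeasurePreserving.tendsto_ae).eventually hlat
  have hrec := hcons.ae_mem_imp_frequently_image_mem (hDmeas N hWc).nullMeasurableSet
  set Q : Set (SubG G) := {H : SubG G | (∀ n : ℕ, DiscreteTopology (T^[n] H).1 ∧
      ∃ F : Set G, MeasurableSet F ∧ IsFundamentalDomain (T^[n] H).1 F ν ∧ ν F ≠ ⊤) ∧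
      (H ∈ D N → ∃ᶠ n in Filter.atTop, T^[n] H ∈ D N)} with hQ
  have hcomb : μ Qᶜ = 0 := by
    have := hall.and hrec
    rw [MeasureTheory.ae_iff] at this
    exact measure_mono_null (fun H hH => hH) this
  have hpos : μ (D N ∩ Q) ≠ 0 := by
    intro h0
    apply hμD
    have hdiff : μ (D N \ Q) = 0 := measure_mono_null (fun H hH => hH.2) hcomb
    have hle := measure_le_inter_add_diff μ (D N) Q
    rw [h0, hdiff, add_zero] at hle
    exact le_antisymm hle zero_le
  obtain ⟨H, hHDN, hHQ⟩ := nonempty_of_measure_ne_zero hpos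
  obtain ⟨hallH, hfreqH⟩ := hHQ
  have hfreq : ∃ᶠ n in Filter.atTop, T^[n] H ∈ D N := hfreqH hHDN
  -- fundamental domains along the orbit
  choose Fn hFnm hFnfd hFnfin using fun n : ℕ => (hallH n).2
  have hdisc : ∀ n : ℕ, DiscreteTopology ((T^[n] H).1) := fun n => (hallH n).1
  -- the scaling of covolumes
  have hqmp : Measure.QuasiMeasurePreserving (⇑B.symm) ν ν := by
    refine ⟨hB'.measurable, ?_⟩
    rw [hmapB]
    exact Measure.smul_absolutelyContinuous
  have hstep : ∀ n : ℕ, ν (Fn (n+1)) = c * ν (Fn n) := by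
    intro n
    haveI : Countable ((T^[n+1] H).1) := countable_of_discrete_subgroup (hdisc (n+1))
    haveI : MeasurableSMul ((T^[n+1] H).1) G := measurableSMul_subgroup _
    haveI : SMulInvariantMeasure ((T^[n+1] H).1) G ν := smulInvariant_subgroup ν _
    have htrans := fd_transport ν B hB'.measurable hqmp (hFnfd n)
    have hiter : T^[n+1] H = T (T^[n] H) := Function.iterate_succ_apply' T n H
    have hfd2 : IsFundamentalDomain ((T^[n+1] H).1) (⇑B.symm ⁻¹' (Fn n)) ν := by
      rw [hiter]; exact htrans
    have hme := (hFnfd (n+1)).measure_eq hfd2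
    rw [hme, ← Measure.map_apply hB'.measurable (hFnm n), hmapB, Measure.smul_apply,
      smul_eq_mul]
  have hgeom : ∀ n : ℕ, ν (Fn n) = c ^ n * ν (Fn 0) := by
    intro n
    induction n with
    | zero => simp
    | succ k ih =>
      rw [hstep k, ih, pow_succ]
      ring
  -- the lower bound at return times
  have hlow : ∀ n : ℕ, T^[n] H ∈ D N → ν V ≤ ν (Fn n) := by
    intro n hmem
    haveI : Countable ((T^[n] H).1) := countable_of_discrete_subgroup (hdisc n)
    apply covol_lower_bound ν _ (hFnm n) (hFnfd n) hVo
    intro γ v hv w hw hγ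
    have hwv : (γ : G) = w * v⁻¹ := by
      rw [← hγ]; group
    have hγN : (γ : G) ∈ N := hwv ▸ hVN w hw v hv
    have h1 : (γ : G) ∈ ({1} : Set G) := hDsub N _ hmem ⟨γ.2, hγN⟩
    exact Subtype.ext h1
  -- contradiction
  have hVpos : 0 < ν V := hVo.measure_pos ν ⟨1, h1V⟩
  have htends : Filter.Tendsto (fun n : ℕ => c ^ n * ν (Fn 0)) Filter.atTop (nhds 0) := by
    have h1 : Filter.Tendsto (fun n : ℕ => c ^ n) Filter.atTop (nhds 0) :=
      ENNReal.tendsto_pow_atTop_nhds_zero_of_lt_one hc1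
    have h2 := ENNReal.Tendsto.mul_const h1 (Or.inr (hFnfin 0))
    simpa using h2
  have hev : ∀ᶠ n in Filter.atTop, c ^ n * ν (Fn 0) < ν V :=
    htends.eventually_lt_const hVpos
  obtain ⟨n, hmemn, hltn⟩ := (hfreq.and_eventually hev).exists
  have hge := hlow n hmemn
  rw [hgeom n] at hge
  exact absurd hge (not_le.mpr hltn)


theorem aut_preserving_lattice_measure_preserves_haar
    [IsTopologicalGroup G] [LocallyCompactSpace G] [SecondCountableTopology G]
    [MeasurableSpace G] [BorelSpace G]
    (ν : Measure G) (hν : ν.IsHaarMeasure)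
    (μ : Measure (SubG G)) (hfin : IsFiniteMeasure μ) (hne : μ ≠ 0)
    (A : G ≃* G) (hA : Continuous A) (hA' : Continuous A.symm)
    (hinv : μ.map (autSub A hA') = μ)
    (hlat : ∀ᵐ H ∂μ, DiscreteTopology H.1 ∧ ∃ F : Set G, MeasurableSet F ∧
      IsFundamentalDomain H.1 F ν ∧ ν F ≠ ⊤) :
    ν.map A = ν := by
  haveI := hν; haveI := hfin
  haveI : (ν.map ⇑A).IsHaarMeasure := MulEquiv.isHaarMeasure_map (μ := ν) A hA hA'
  have huniq := Measure.isMulLeftInvariant_eq_smul (ν.map ⇑A) ν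
  set c₀ : NNReal := Measure.haarScalarFactor (ν.map ⇑A) ν with hc₀
  have hc₀pos : 0 < c₀ := Measure.haarScalarFactor_pos_of_isHaarMeasure _ _
  have hmap : ν.map ⇑A = (c₀ : ℝ≥0∞) • ν := by
    rw [huniq, ENNReal.smul_def]
  have hcomp : (ν.map ⇑A).map ⇑A.symm = ν := by
    rw [Measure.map_map hA'.measurable hA.measurable]
    simp [MulEquiv.symm_comp_self]
  have hmapsymm : ν.map ⇑A.symm = (c₀ : ℝ≥0∞)⁻¹ • ν := by
    have h1 : ν = (c₀ : ℝ≥0∞) • (ν.map ⇑A.symm) := by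
      conv_lhs => rw [← hcomp]
      rw [hmap, Measure.map_smul]
    have h2 : (c₀ : ℝ≥0∞)⁻¹ • ν = ν.map ⇑A.symm := by
      conv_lhs => rw [h1]
      rw [smul_smul, ENNReal.inv_mul_cancel (by exact_mod_cast hc₀pos.ne')
        ENNReal.coe_ne_top, one_smul]
    exact h2.symm
  rcases lt_trichotomy ((c₀ : ℝ≥0∞)) 1 with hlt | heq | hgt
  · -- c₀ < 1 : the inverse automorphism shrinks covolumes
    exfalso
    have hBc : Continuous ⇑A.symm.symm := by rw [MulEquiv.symm_symm]; exact hA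
    have hinv2 : μ.map (autSub A.symm hBc) = μ := by
      have hcompT : (autSub A.symm hBc) ∘ (autSub A hA') = id := by
        funext H
        apply Subtype.ext
        show ((autSub A.symm hBc (autSub A hA' H)).1 : Subgroup G) = H.1
        have h1 : (autSub A.symm hBc (autSub A hA' H)).1
            = (H.1.comap A.symm.toMonoidHom).comap A.symm.symm.toMonoidHom := rfl
        rw [h1, Subgroup.comap_comap]
        have h2 : (A.symm.toMonoidHom.comp A.symm.symm.toMonoidHom) = MonoidHom.id G := by
          ext x; simp
        rw [h2, Subgroup.comap_id]
      calc μ.map (autSub A.symm hBc)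
          = (μ.map (autSub A hA')).map (autSub A.symm hBc) := by rw [hinv]
        _ = μ.map ((autSub A.symm hBc) ∘ (autSub A hA')) :=
            Measure.map_map (continuous_autSub A.symm hA' hBc).measurable
              (continuous_autSub A hA hA').measurable
        _ = μ := by rw [hcompT, Measure.map_id]
    refine no_shrink ν hν μ hfin hne A.symm hA' hBc hinv2 hlat ((c₀ : ℝ≥0∞)) hlt ?_
    have hAA : ⇑A.symm.symm = ⇑A := by rw [MulEquiv.symm_symm]
    rw [hAA]
    exact hmap
  · rw [hmap, heq, one_smul]
  · exfalso
    refine no_shrink ν hν μ hfin hne A hA hA' hinv hlat ((c₀ : ℝ≥0∞))⁻¹ ?_ hmapsymm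
    exact ENNReal.inv_lt_one.mpr hgt
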